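/- Let 𝒜 be a nonempty (possibly infinite) family of finite nonempty subsets of ℤ^d. Then there exists a function F : ℤ^d → ℤ/2ℤ such that for every A ∈ 𝒜 the value Σ_{x ∈ A+p} F(x) is independent of p ∈ ℤ^d (stability), and there exists some A ∈ 𝒜 with Σ_{x ∈ A} F(x) = 1 (not 0-stable). -/

import Mathlib

open AddMonoidAlgebra

namespace StableAux

variable {d : ℕ}

noncomputable abbrev Rd (d : ℕ) := AddMonoidAlgebra (ZMod 2) (Fin d → ℤ)

noncomputable def fA (A : Finset (Fin d → ℤ)) : Rd d :=
  ∑ a ∈ A, AddMonoidAlgebra.single a 1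

noncomputable def Msub (𝒜 : Set (Finset (Fin d → ℤ))) : Submodule (ZMod 2) (Rd d) :=
  Submodule.span (ZMod 2)
    {z | ∃ A ∈ 𝒜, ∃ p q : Fin d → ℤ,
      z = fA A * (AddMonoidAlgebra.single p 1 + AddMonoidAlgebra.single q 1)}

noncomputable def ε (d : ℕ) : Rd d →ₐ[ZMod 2] ZMod 2 :=
  AddMonoidAlgebra.lift (ZMod 2) (ZMod 2) (Fin d → ℤ) 1

theorem eps_single (a : Fin d → ℤ) (c : ZMod 2) : ε d (AddMonoidAlgebra.single a c) = c := by
  simp [ε, AddMonoidAlgebra.lift_single]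

instance : AddMonoid.FG (Fin d → ℤ) :=
  AddGroup.fg_iff_addMonoid_fg.mp (Module.Finite.iff_addGroup_fg.mp inferInstance)

instance : IsNoetherianRing (Rd d) :=
  Algebra.FiniteType.isNoetherianRing (ZMod 2) (Rd d)

theorem fA_ne_zero {A : Finset (Fin d → ℤ)} (hA : A.Nonempty) : fA A ≠ 0 := by
  obtain ⟨a, ha⟩ := hA
  intro h
  have : (fA A).coeff a = 1 := by
    classical
    rw [fA, AddMonoidAlgebra.coeff_sum]; simp only [AddMonoidAlgebra.coeff_single]; rw [Finset.sum_apply']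
    rw [Finset.sum_eq_single a (fun b _ hb => Finsupp.single_eq_of_ne' hb)
      (fun hna => absurd ha hna)]
    simp
  rw [h] at this
  simp at this

theorem key (𝒜 : Set (Finset (Fin d → ℤ))) (h1 : 𝒜.Nonempty)
    (h2 : ∀ A ∈ 𝒜, A.Nonempty) : ∃ A ∈ 𝒜, fA A ∉ Msub 𝒜 := by
  by_contra h
  push_neg at h
  set I : Ideal (Rd d) := Ideal.span (fA '' 𝒜) with hI
  set m : Ideal (Rd d) := RingHom.ker (ε d : Rd d →+* ZMod 2) with hm
  have hMle : Msub 𝒜 ≤ Submodule.restrictScalars (ZMod 2) (m • I) := by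
    rw [Msub, Submodule.span_le]
    rintro z ⟨A, hA, p, q, rfl⟩
    rw [mul_comm]
    have hx : (AddMonoidAlgebra.single p (1 : ZMod 2) + AddMonoidAlgebra.single q 1 : Rd d) ∈ m := by
      rw [hm, RingHom.mem_ker]; show ε d _ = 0; rw [map_add, eps_single, eps_single]; decide
    have hy : fA A ∈ I := Ideal.subset_span ⟨A, hA, rfl⟩
    have := Submodule.smul_mem_smul hx hy
    rw [SetLike.mem_coe, Submodule.restrictScalars_mem, ← smul_eq_mul]
    exact this
  have hle : I ≤ m • I := by
    rw [hI, Ideal.span_le]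
    rintro z ⟨A, hA, rfl⟩
    exact hMle (h A hA)
  obtain ⟨r, hr1, hr2⟩ :=
    Submodule.exists_sub_one_mem_and_smul_eq_zero_of_fg_of_le_smul m I
      (IsNoetherian.noetherian I) hle
  obtain ⟨A₀, hA₀⟩ := h1
  have hfI : fA A₀ ∈ I := Ideal.subset_span ⟨A₀, hA₀, rfl⟩
  have hrz : r * fA A₀ = 0 := hr2 _ hfI
  have hεr : ε d r = 1 := by
    have := hr1
    rw [hm, RingHom.mem_ker] at this
    have h1' : ε d (r - 1) = 0 := this
    rw [map_sub, map_one, sub_eq_zero] at h1'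
    exact h1'
  have hr0 : r ≠ 0 := fun h0 => by simp [h0] at hεr
  rcases mul_eq_zero.mp hrz with h' | h'
  · exact hr0 h'
  · exact fA_ne_zero (h2 A₀ hA₀) h'

end StableAux

theorem exists_stable_not_zero_stable_lattice (d : ℕ)
    (𝒜 : Set (Finset (Fin d → ℤ))) (h1 : 𝒜.Nonempty)
    (h2 : ∀ A ∈ 𝒜, A.Nonempty) :
    ∃ F : (Fin d → ℤ) → ZMod 2,
      (∀ A ∈ 𝒜, ∀ p q : Fin d → ℤ, ∑ x ∈ A, F (x + p) = ∑ x ∈ A, F (x + q)) ∧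
      (∃ A ∈ 𝒜, ∑ x ∈ A, F x = 1) := by
  classical
  obtain ⟨A₀, hA₀, hA₀n⟩ := StableAux.key 𝒜 h1 h2
  set M := StableAux.Msub 𝒜 with hM
  have hv : M.mkQ (StableAux.fA A₀) ≠ 0 := fun h0 => by
    rw [Submodule.mkQ_apply] at h0
    exact hA₀n ((Submodule.Quotient.mk_eq_zero M).mp h0)
  have hφ : ∃ φ : Module.Dual (ZMod 2) ((StableAux.Rd d) ⧸ M),
      φ (M.mkQ (StableAux.fA A₀)) ≠ 0 := by
    by_contra hc
    push_neg at hc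
    exact hv ((Module.forall_dual_apply_eq_zero_iff (ZMod 2) _).mp hc)
  obtain ⟨φ, hφ⟩ := hφ
  set ψ : StableAux.Rd d →ₗ[ZMod 2] ZMod 2 := φ ∘ₗ M.mkQ with hψ
  have hψM : ∀ z ∈ M, ψ z = 0 := by
    intro z hz
    simp [hψ, (Submodule.Quotient.mk_eq_zero M).mpr hz]
  have hsum : ∀ (A : Finset (Fin d → ℤ)) (p : Fin d → ℤ),
      ∑ x ∈ A, ψ (AddMonoidAlgebra.single (x + p) 1)
        = ψ (StableAux.fA A * AddMonoidAlgebra.single p 1) := by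
    intro A p
    rw [StableAux.fA, Finset.sum_mul, ← map_sum]
    congr 1
    refine Finset.sum_congr rfl fun a _ => ?_
    rw [AddMonoidAlgebra.single_mul_single, one_mul]
  refine ⟨fun x => ψ (AddMonoidAlgebra.single x 1), ?_, ?_⟩
  · intro A hA p q
    rw [hsum, hsum]
    have hmem : StableAux.fA A * (AddMonoidAlgebra.single p 1 + AddMonoidAlgebra.single q 1)
        ∈ M := Submodule.subset_span ⟨A, hA, p, q, rfl⟩
    have := hψM _ hmem
    rw [mul_add, map_add] at this
    exact (by decide : ∀ a b : ZMod 2, a + b = 0 → a = b) _ _ this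
  · refine ⟨A₀, hA₀, ?_⟩
    have : ∑ x ∈ A₀, ψ (AddMonoidAlgebra.single x 1) = ψ (StableAux.fA A₀) := by
      rw [StableAux.fA, map_sum]
    rw [this]
    have : ψ (StableAux.fA A₀) ≠ 0 := hφ
    revert this
    generalize ψ (StableAux.fA A₀) = c
    revert c
    decide
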